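/- Let A be a commutative noetherian ring, G a locally profinite group, and (π,V) a smooth A[G]-module which is admissible (for every compact open subgroup K of G the module of K-fixed vectors V^K is finitely generated over A) and G-finite (finitely generated as an A[G]-module). Then the algebra End_{A[G]}(V) of A[G]-module endomorphisms of V is a finitely generated A-module. -/

import Mathlib

set_option linter.unusedVariables false
set_option linter.unnecessarySimpa false
set_option maxHeartbeats 1000000
set_option synthInstance.maxHeartbeats 2000000

noncomputable section
open scoped TensorProduct Classical

namespace Doubling

variable (A : Type) [CommRing A]

private theorem algMemAux (a : A) : ((algebraMap A (LaurentSeries A)) a).support.Finite := by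
  have h : (algebraMap A (LaurentSeries A)) a
      = HahnSeries.ofPowerSeries ℤ A ((algebraMap A (PowerSeries A)) a) := rfl
  rw [h, PowerSeries.algebraMap_apply]
  simp only [Algebra.algebraMap_self, RingHom.id_apply]
  rw [HahnSeries.ofPowerSeries_C]
  apply Set.Finite.subset (Set.finite_singleton (0:ℤ))
  rw [HahnSeries.C_apply]
  exact HahnSeries.support_single_subset

/-- The Laurent polynomial ring `A[X,X⁻¹]`, realized as the subalgebra of
finitely supported elements of the Laurent series ring `A[[X]][X⁻¹] = LaurentSeries A`. -/
def LPol : Subalgebra A (LaurentSeries A) where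
  carrier := {x | x.support.Finite}
  mul_mem' {x y} hx hy :=
    Set.Finite.subset (hx.add hy) HahnSeries.support_mul_subset
  add_mem' {x y} hx hy :=
    Set.Finite.subset (hx.union hy) (HahnSeries.support_add_subset x y)
  algebraMap_mem' a := algMemAux A a

/-- Membership in the multiplicative set `S ⊆ A[X,X⁻¹]` of Laurent polynomials
whose leading and trailing coefficients are units of `A`. -/
def memS (x : LaurentSeries A) : Prop :=
  x.support.Finite ∧ ∃ n m : ℤ, IsUnit (x.coeff n) ∧ IsUnit (x.coeff m) ∧
    ∀ k : ℤ, (k < n ∨ m < k) → x.coeff k = 0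

/-- Membership in the localization `S⁻¹A[X,X⁻¹]`, regarded inside `A[[X]][X⁻¹]`
(each element of `S` is invertible in `A[[X]][X⁻¹]`, so the localization embeds). -/
def memSinv (x : LaurentSeries A) : Prop :=
  ∃ q : LaurentSeries A, memS A q ∧ (q * x).support.Finite

/-- The involution `X ↦ X⁻¹` of `A[X,X⁻¹]` (extended by `0` to series with
infinite support). -/
def linv (x : LaurentSeries A) : LaurentSeries A :=
  if hx : x.support.Finite then ∑ k ∈ hx.toFinset, HahnSeries.single (-k) (x.coeff k) else 0

variable {A}
variable {G : Type} [Group G] [TopologicalSpace G]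
variable {V : Type} [AddCommGroup V] [Module A V]

/-- The smooth vectors of a representation: vectors with open stabilizer subgroup. -/
def smoothVectors (ρ : Representation A G V) : Submodule A V where
  carrier := {v | ∃ K : Subgroup G, IsOpen (K : Set G) ∧ ∀ k ∈ K, ρ k v = v}
  zero_mem' := ⟨⊤, by simpa using isOpen_univ, fun k _ => map_zero _⟩
  add_mem' := by
    rintro v w ⟨K₁, hK₁, hv⟩ ⟨K₂, hK₂, hw⟩
    exact ⟨K₁ ⊓ K₂, by simpa [Subgroup.coe_inf] using hK₁.inter hK₂,
      fun k hk => by rw [map_add, hv k hk.1, hw k hk.2]⟩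
  smul_mem' := by
    rintro c v ⟨K, hK, hv⟩
    exact ⟨K, hK, fun k hk => by rw [map_smul, hv k hk]⟩

/-- A representation is smooth if every vector is smooth. -/
def IsSmoothRep (ρ : Representation A G V) : Prop := ∀ v : V, v ∈ smoothVectors ρ

/-- The `K`-fixed vectors of a representation. -/
def fixedPts (ρ : Representation A G V) (K : Subgroup G) : Submodule A V where
  carrier := {v | ∀ k ∈ K, ρ k v = v}
  zero_mem' := fun k _ => map_zero _
  add_mem' := fun hv hw k hk => by rw [map_add, hv k hk, hw k hk]
  smul_mem' := fun c v hv k hk => by rw [map_smul, hv k hk]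

/-- Admissibility: for every compact open subgroup `K` the module of `K`-fixed
vectors is finitely generated over `A`. -/
def IsAdmissibleRep (ρ : Representation A G V) : Prop :=
  ∀ K : Subgroup G, IsOpen (K : Set G) → IsCompact (K : Set G) →
    Module.Finite A (fixedPts ρ K)

/-- `G`-finiteness: `V` is finitely generated as an `A[G]`-module. -/
def IsGFinite (ρ : Representation A G V) : Prop :=
  ∃ s : Finset V, Submodule.span A {w | ∃ g : G, ∃ v ∈ s, w = ρ g v} = ⊤

/-- The contragredient `Ṽ`: smooth vectors of the dual representation. -/
def contragredient (ρ : Representation A G V) : Submodule A (Module.Dual A V) :=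
  smoothVectors ρ.dual

/-- The matrix coefficient `g ↦ λ(π(g)v)`. -/
def matCoeffFn (ρ : Representation A G V) (v : V) (l : Module.Dual A V) : G → A :=
  fun g => l (ρ g v)

/-- The module `M(π)` of matrix coefficients of a representation. -/
def MatCoef (ρ : Representation A G V) : Submodule A (G → A) :=
  Submodule.span A {φ | ∃ v : V, ∃ l ∈ contragredient ρ, φ = matCoeffFn ρ v l}

/-- The action of `G × G` on functions on `G`: `((g₁,g₂)·φ)(g) = φ(g₂⁻¹ g g₁)`. -/
def doubleAct : Representation A (G × G) (G → A) where
  toFun p :=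
    { toFun := fun φ g => φ (p.2⁻¹ * g * p.1)
      map_add' := fun φ ψ => rfl
      map_smul' := fun c φ => rfl }
  map_one' := by ext φ g; simp
  map_mul' p q := by
    ext φ g
    simp [Module.End.mul_apply, mul_assoc]


/-- The algebra of `A[G]`-module endomorphisms of `V` (as an `A`-module). -/
def equivEnd (ρ : Representation A G V) : Submodule A (Module.End A V) where
  carrier := {φ | ∀ g : G, φ ∘ₗ (ρ g) = (ρ g) ∘ₗ φ}
  zero_mem' := by intro g; ext v; simp
  add_mem' := by
    intro φ ψ hφ hψ g
    ext v
    simp [LinearMap.add_comp, LinearMap.comp_add, hφ g, hψ g]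
  smul_mem' := by
    intro c φ hφ g
    ext v
    simp [LinearMap.smul_comp, LinearMap.comp_smul, hφ g]

section Aux

open scoped Pointwise
open Set Filter Topology

private lemma exist_mul_closure_nhd' {G : Type*} [Group G] [TopologicalSpace G]
    [IsTopologicalGroup G] {W : Set G} (Wcomp : IsCompact W) (Wopen : IsOpen W) :
    ∃ T ∈ 𝓝 (1 : G), W * T ⊆ W := by
  apply Wcomp.induction_on (p := fun S ↦ ∃ T ∈ 𝓝 (1 : G), S * T ⊆ W)
    ⟨Set.univ, by simp only [univ_mem, empty_mul, empty_subset, and_self]⟩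
    (fun _ _ huv ⟨T, hT, mem⟩ ↦ ⟨T, hT, (mul_subset_mul_right huv).trans mem⟩)
    fun U V ⟨T₁, hT₁, mem1⟩ ⟨T₂, hT₂, mem2⟩ ↦ ⟨T₁ ∩ T₂, inter_mem hT₁ hT₂, by
      rw [union_mul]
      exact union_subset (mul_subset_mul_left inter_subset_left |>.trans mem1)
        (mul_subset_mul_left inter_subset_right |>.trans mem2)⟩
  intro x memW
  have : (x, 1) ∈ (fun p : G × G ↦ p.1 * p.2) ⁻¹' W := by simp [memW]
  rcases isOpen_prod_iff.mp (continuous_mul.isOpen_preimage W Wopen) x 1 this with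
    ⟨U, V, Uopen, Vopen, xmemU, onememV, prodsub⟩
  have h6 : U * V ⊆ W := mul_subset_iff.mpr (fun _ hx _ hy ↦ prodsub (mk_mem_prod hx hy))
  exact ⟨U ∩ W, ⟨U, Uopen.mem_nhds xmemU, W, fun _ a ↦ a, rfl⟩,
    V, IsOpen.mem_nhds Vopen onememV, fun _ a ↦ h6 ((mul_subset_mul_right inter_subset_left) a)⟩

private lemma exists_mulInvClosureNhd' {G : Type*} [Group G] [TopologicalSpace G]
    [IsTopologicalGroup G] {W : Set G} (Wcomp : IsCompact W) (Wopen : IsOpen W) :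
    ∃ T, IsTopologicalGroup.mulInvClosureNhd T W := by
  rcases exist_mul_closure_nhd' Wcomp Wopen with ⟨S, Smemnhds, mulclose⟩
  rcases mem_nhds_iff.mp Smemnhds with ⟨U, UsubS, Uopen, onememU⟩
  refine ⟨U ∩ U⁻¹, ?_, ?_, ?_, ?_⟩
  · simp [Uopen.mem_nhds onememU, inv_mem_nhds_one]
  · simp [inter_comm]
  · exact Uopen.inter Uopen.inv
  · exact fun a ha ↦ mulclose (mul_subset_mul_left UsubS (mul_subset_mul_left inter_subset_left ha))

private theorem exists_openSubgroup_of_compact_open {G : Type*} [Group G] [TopologicalSpace G]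
    [IsTopologicalGroup G] {W : Set G} (Wcomp : IsCompact W) (Wopen : IsOpen W) (einW : 1 ∈ W) :
    ∃ H : OpenSubgroup G, (H : Set G) ⊆ W := by
  rcases exists_mulInvClosureNhd' Wcomp Wopen with ⟨V, hV⟩
  let S : Subgroup G := {
    carrier := ⋃ n, V ^ (n + 1)
    mul_mem' := fun ha hb ↦ by
      rcases mem_iUnion.mp ha with ⟨k, hk⟩
      rcases mem_iUnion.mp hb with ⟨l, hl⟩
      apply mem_iUnion.mpr
      use k + 1 + l
      rw [add_assoc, pow_add]
      exact Set.mul_mem_mul hk hl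
    one_mem' := by
      apply mem_iUnion.mpr
      use 0
      simp [mem_of_mem_nhds hV.nhds]
    inv_mem' := fun ha ↦ by
      rcases mem_iUnion.mp ha with ⟨k, hk⟩
      apply mem_iUnion.mpr
      use k
      rw [← hV.inv]
      simpa only [inv_pow, Set.mem_inv, inv_inv] using hk }
  have : IsOpen (⋃ n, V ^ (n + 1)) := by
    refine isOpen_iUnion (fun n ↦ ?_)
    rw [pow_succ]
    exact hV.isOpen.mul_left
  use ⟨S, this⟩
  have mulVpow (n : ℕ) : W * V ^ (n + 1) ⊆ W := by
    induction' n with n ih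
    · simp [hV.mul]
    · rw [pow_succ, ← mul_assoc]
      exact (Set.mul_subset_mul_right ih).trans hV.mul
  have (n : ℕ) : V ^ (n + 1) ⊆ W * V ^ (n + 1) := by
    intro x xin
    rw [Set.mem_mul]
    use 1, einW, x, xin
    rw [one_mul]
  exact iUnion_subset fun i _ a ↦ mulVpow i (this i a)

end Aux

/-- **Statement 9.**  Let `A` be a commutative noetherian ring, `G` a locally
profinite group and `(π,V)` a smooth, admissible, `G`-finite `A[G]`-module.  Then
`End_{A[G]}(V)` is a finitely generated `A`-module. -/
theorem statement9
    [IsNoetherianRing A]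
    [IsTopologicalGroup G] [LocallyCompactSpace G] [TotallyDisconnectedSpace G] [T2Space G]
    (ρ : Representation A G V)
    (hsmooth : IsSmoothRep ρ)
    (hadm : IsAdmissibleRep ρ)
    (hfin : IsGFinite ρ) :
    Module.Finite A ↥(equivEnd ρ) := by
  obtain ⟨s, hspan⟩ := hfin
  -- choose for each generator an open subgroup fixing it
  choose Kv hKvopen hKvfix using fun v : V => hsmooth v
  -- the open set of elements fixing all generators
  set O : Set G := ⋂ v ∈ s, (Kv v : Set G) with hO
  have hOopen : IsOpen O := isOpen_biInter_finset fun v _ => hKvopen v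
  have hOmem : (1 : G) ∈ O := by
    simp only [hO, Set.mem_iInter]
    intro v _
    exact (Kv v).one_mem
  -- find a compact open subgroup H inside O
  obtain ⟨C, hCcomp, hCint, hCsub⟩ := exists_compact_subset hOopen hOmem
  obtain ⟨W, hWclopen, hWmem, hWsub⟩ :=
    (loc_compact_Haus_tot_disc_of_zero_dim (H := G)).mem_nhds_iff.mp
      (isOpen_interior.mem_nhds hCint)
  have hWcomp : IsCompact W :=
    hCcomp.of_isClosed_subset hWclopen.isClosed (hWsub.trans interior_subset)
  obtain ⟨H, hHsub⟩ := exists_openSubgroup_of_compact_open hWcomp hWclopen.isOpen hWmem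
  have hHO : (H : Set G) ⊆ O := hHsub.trans ((hWsub.trans interior_subset).trans hCsub)
  have hHcomp : IsCompact (H : Set G) :=
    hWcomp.of_isClosed_subset H.isClosed hHsub
  -- H fixes every generator
  have hHfix : ∀ v ∈ s, ∀ k ∈ H.toSubgroup, ρ k v = v := by
    intro v hv k hk
    apply hKvfix v k
    have := hHO hk
    simp only [hO, Set.mem_iInter] at this
    exact this v hv
  -- the fixed points of H form a finite A-module
  have hfinfix : Module.Finite A (fixedPts ρ H.toSubgroup) :=
    hadm H.toSubgroup H.isOpen hHcomp
  -- the evaluation map on generators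
  let Φ : ↥(equivEnd ρ) →ₗ[A] (↥s → ↥(fixedPts ρ H.toSubgroup)) :=
    { toFun := fun φ v => ⟨(φ : Module.End A V) (v : V), by
        intro k hk
        have h1 := congrFun (congrArg (fun f : Module.End A V => (f : V → V)) (φ.2 k)) (v : V)
        simp only [LinearMap.coe_comp, Function.comp_apply] at h1
        rw [← h1, hHfix v v.2 k hk]⟩
      map_add' := fun φ ψ => by ext v; rfl
      map_smul' := fun c φ => by ext v; rfl }
  have hΦinj : Function.Injective Φ := by
    intro φ ψ hφψ
    -- reduce to showing φ - ψ vanishes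
    apply Subtype.ext
    apply LinearMap.ext
    intro w
    have key : ∀ w ∈ Submodule.span A {w | ∃ g : G, ∃ v ∈ s, w = ρ g v},
        (φ : Module.End A V) w = (ψ : Module.End A V) w := by
      intro w hw
      induction hw using Submodule.span_induction with
      | mem x hx =>
        obtain ⟨g, v, hv, rfl⟩ := hx
        have h1 := congrFun (congrArg (fun f : Module.End A V => (f : V → V)) (φ.2 g)) v
        have h2 := congrFun (congrArg (fun f : Module.End A V => (f : V → V)) (ψ.2 g)) v
        simp only [LinearMap.coe_comp, Function.comp_apply] at h1 h2
        have hval : (φ : Module.End A V) v = (ψ : Module.End A V) v := by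
          have := congrFun hφψ ⟨v, hv⟩
          exact congrArg Subtype.val this
        rw [h1, h2, hval]
      | zero => simp
      | add x y _ _ hx hy => simp [map_add, hx, hy]
      | smul c x _ hx => simp [map_smul, hx]
    exact key w (hspan ▸ Submodule.mem_top)
  exact Module.Finite.of_injective Φ hΦinj

end Doubling
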